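/- Let m ≥ 2 and let x = (x_1, …, x_m) be a tuple of real numbers. Then x satisfies conditions (1) and (2) if and only if x satisfies conditions (1) and (3). In particular, if W_m = −I and the weak sign condition (3) holds, then all the corresponding inequalities hold strictly: a_j < 0 for 2 ≤ j ≤ m−1, b_j > 0 and c_j < 0 for 1 ≤ j ≤ m−1, and d_j > 0 for 1 ≤ j ≤ m−2. -/
import Mathlib


/-- The matrix `A = [[0, 1], [-1, t]]` associated to an edge with cross ratio `t`. -/
noncomputable def crossA (t : ℝ) : Matrix (Fin 2) (Fin 2) ℝ := !![0, 1; -1, t]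

/-- The partial product `W_j = A_1 A_2 ⋯ A_j` of the matrices associated to the
cross ratios `x_1, …, x_m` (1-indexed: `crossW m x j` is `W_j`). -/
noncomputable def crossW (m : ℕ) (x : Fin m → ℝ) (j : ℕ) : Matrix (Fin 2) (Fin 2) ℝ :=
  ((List.ofFn fun i : Fin m => crossA (x i)).take j).prod

/-- Condition (1): `W_m = -I`. -/
def Cond1 (m : ℕ) (x : Fin m → ℝ) : Prop := crossW m x m = -1

/-- Condition (2) (strict sign condition): `a_1 = 0`, `d_{m-1} = 0`,
`a_j < 0` for `2 ≤ j ≤ m-1`, `d_j > 0` for `1 ≤ j ≤ m-2`, and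
`b_j > 0`, `c_j < 0` for `1 ≤ j ≤ m-1`. -/
def Cond2 (m : ℕ) (x : Fin m → ℝ) : Prop :=
  crossW m x 1 0 0 = 0 ∧ crossW m x (m - 1) 1 1 = 0 ∧
  (∀ j, 2 ≤ j → j ≤ m - 1 → crossW m x j 0 0 < 0) ∧
  (∀ j, 1 ≤ j → j ≤ m - 2 → 0 < crossW m x j 1 1) ∧
  (∀ j, 1 ≤ j → j ≤ m - 1 → 0 < crossW m x j 0 1 ∧ crossW m x j 1 0 < 0)

/-- Condition (3) (weak sign condition): as in (2) but with non-strict inequalities. -/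
def Cond3 (m : ℕ) (x : Fin m → ℝ) : Prop :=
  crossW m x 1 0 0 = 0 ∧ crossW m x (m - 1) 1 1 = 0 ∧
  (∀ j, 2 ≤ j → j ≤ m - 1 → crossW m x j 0 0 ≤ 0) ∧
  (∀ j, 1 ≤ j → j ≤ m - 2 → 0 ≤ crossW m x j 1 1) ∧
  (∀ j, 1 ≤ j → j ≤ m - 1 → 0 ≤ crossW m x j 0 1 ∧ crossW m x j 1 0 ≤ 0)

lemma crossW_succ (m : ℕ) (x : Fin m → ℝ) (j : ℕ) (hj : j < m) :
    crossW m x (j+1) = crossW m x j * crossA (x ⟨j, hj⟩) := by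
  unfold crossW
  rw [List.prod_take_succ _ j (by simpa using hj)]
  simp

lemma crossW_det (m : ℕ) (x : Fin m → ℝ) (j : ℕ) : (crossW m x j).det = 1 := by
  induction j with
  | zero => simp [crossW]
  | succ n ih =>
    by_cases h : n < m
    · rw [crossW_succ m x n h, Matrix.det_mul, ih]
      simp [crossA, Matrix.det_fin_two_of]
    · have : crossW m x (n+1) = crossW m x n := by
        unfold crossW
        rw [List.take_of_length_le (by simpa using by omega),
            List.take_of_length_le (by simpa using by omega)]
      rw [this, ih]

lemma entry_a (m : ℕ) (x : Fin m → ℝ) (j : ℕ) (hj : j < m) :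
    crossW m x (j+1) 0 0 = -(crossW m x j 0 1) := by
  rw [crossW_succ m x j hj]
  simp [crossA, Matrix.mul_apply, Fin.sum_univ_two]

lemma entry_c (m : ℕ) (x : Fin m → ℝ) (j : ℕ) (hj : j < m) :
    crossW m x (j+1) 1 0 = -(crossW m x j 1 1) := by
  rw [crossW_succ m x j hj]
  simp [crossA, Matrix.mul_apply, Fin.sum_univ_two]

lemma strict_of_weak (m : ℕ) (hm : 2 ≤ m) (x : Fin m → ℝ) (h : Cond3 m x) :
    (∀ j, 2 ≤ j → j ≤ m - 1 → crossW m x j 0 0 < 0) ∧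
    (∀ j, 1 ≤ j → j ≤ m - 1 → 0 < crossW m x j 0 1 ∧ crossW m x j 1 0 < 0) ∧
    (∀ j, 1 ≤ j → j ≤ m - 2 → 0 < crossW m x j 1 1) := by
  obtain ⟨h1, h2, h3, h4, h5⟩ := h
  have hbc : ∀ j, 1 ≤ j → j ≤ m - 1 →
      0 < crossW m x j 0 1 ∧ crossW m x j 1 0 < 0 := by
    intro j hj1 hj2
    have hdet := crossW_det m x j
    rw [Matrix.det_fin_two] at hdet
    have ha : crossW m x j 0 0 ≤ 0 := by
      rcases eq_or_lt_of_le hj1 with hh | hh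
      · rw [← hh, h1]
      · exact h3 j hh hj2
    have had : crossW m x j 0 0 * crossW m x j 1 1 ≤ 0 := by
      rcases lt_or_eq_of_le hj2 with hh | hh
      · exact mul_nonpos_iff.mpr (Or.inr ⟨ha, h4 j hj1 (by omega)⟩)
      · rw [hh, h2, mul_zero]
    have hb := (h5 j hj1 hj2).1
    have hc := (h5 j hj1 hj2).2
    constructor
    · nlinarith
    · nlinarith
  refine ⟨?_, hbc, ?_⟩
  · intro j hj1 hj2
    obtain ⟨k, rfl⟩ : ∃ k, j = k + 1 := ⟨j - 1, by omega⟩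
    have hk : k < m := by omega
    rw [entry_a m x k hk]
    have := (hbc k (by omega) (by omega)).1
    linarith
  · intro j hj1 hj2
    have hj : j < m := by omega
    have := (hbc (j+1) (by omega) (by omega)).2
    rw [entry_c m x j hj] at this
    linarith

/-- Lemma 3.1: conditions (1),(2) hold iff conditions (1),(3) hold; in particular, if
`W_m = -I` and the weak sign condition (3) holds, then all the inequalities are strict. -/
theorem cond_strict_iff_weak (m : ℕ) (hm : 2 ≤ m) (x : Fin m → ℝ) :
    ((Cond1 m x ∧ Cond2 m x) ↔ (Cond1 m x ∧ Cond3 m x)) ∧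
    (Cond1 m x → Cond3 m x →
      (∀ j, 2 ≤ j → j ≤ m - 1 → crossW m x j 0 0 < 0) ∧
      (∀ j, 1 ≤ j → j ≤ m - 1 → 0 < crossW m x j 0 1 ∧ crossW m x j 1 0 < 0) ∧
      (∀ j, 1 ≤ j → j ≤ m - 2 → 0 < crossW m x j 1 1)) := by
  refine ⟨⟨fun ⟨h1, h2⟩ => ⟨h1, h2.1, h2.2.1,
      fun j a b => (h2.2.2.1 j a b).le,
      fun j a b => (h2.2.2.2.1 j a b).le,
      fun j a b => ⟨(h2.2.2.2.2 j a b).1.le, (h2.2.2.2.2 j a b).2.le⟩⟩,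
    fun ⟨h1, h3⟩ => ⟨h1, ?_⟩⟩, fun _ h3 => strict_of_weak m hm x h3⟩
  obtain ⟨S1, S2, S3⟩ := strict_of_weak m hm x h3
  exact ⟨h3.1, h3.2.1, S1, S3, S2⟩
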